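/- The space of weight systems of degree 3 (linear functionals on degree-3 chord diagrams satisfying the 1-term and 4-term relations) is one-dimensional; every such weight system is a scalar multiple of W_3, which takes value 2 on the fully crossing triple, 1 on the chain diagram, and 0 otherwise. -/
import Mathlib


/- Chord diagrams of degree 3: fixed-point-free involutions (perfect matchings)
   of 4 cyclically ordered points, modelled as `ZMod 6`. -/

/-- `f` is a perfect matching (chord diagram structure) on the cyclically
ordered point set. -/
def IsMatching3 (f : ZMod 6 → ZMod 6) : Prop :=
  (∀ x, f (f x) = x) ∧ ∀ x, f x ≠ x

/-- The chords through `a` and through `b` cross: exactly one of `b`, `f b`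
lies strictly between `a` and `f a` in the cyclic order. -/
def Crossed3 (f : ZMod 6 → ZMod 6) (a b : ZMod 6) : Prop :=
  b ≠ a ∧ b ≠ f a ∧
    ¬(((0 < (b - a).val ∧ (b - a).val < (f a - a).val)) ↔
      ((0 < (f b - a).val ∧ (f b - a).val < (f a - a).val)))

/-- The chord through `a` is isolated: it crosses no other chord. -/
def Isolated3 (f : ZMod 6 → ZMod 6) (a : ZMod 6) : Prop :=
  ∀ b, ¬ Crossed3 f a b

/-- 1-term relation: a weight system vanishes on diagrams with an isolated chord. -/
def OneTerm3 (W : (ZMod 6 → ZMod 6) → ℚ) : Prop :=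
  ∀ f, IsMatching3 f → (∃ a, Isolated3 f a) → W f = 0

/-- Transposition of two points of the circle. -/
def swapF3 (a b : ZMod 6) : ZMod 6 → ZMod 6 :=
  fun x => if x = a then b else if x = b then a else x

/-- Slide permutation: moves the point `a + 1` (an endpoint of a chord) to the
position just after `b`, shifting intermediate points back by one; this realizes
moving one endpoint of a chord along the circle past everything between `a` and `b`. -/
def slideF3 (a b : ZMod 6) : ZMod 6 → ZMod 6 :=
  fun x => if x = a + 1 then b else
    if (x - (a + 1)).val ≤ (b - (a + 1)).val then x - 1 else x

/-- Inverse of `slideF3 a b`. -/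
def slideInvF3 (a b : ZMod 6) : ZMod 6 → ZMod 6 :=
  fun x => if x = b then a + 1 else
    if (x - (a + 1)).val < (b - (a + 1)).val then x + 1 else x

/-- Relabelling (conjugation) of a matching by a bijection of the circle
given together with its inverse. -/
def conjF3 (s sinv : ZMod 6 → ZMod 6) (f : ZMod 6 → ZMod 6) : ZMod 6 → ZMod 6 :=
  s ∘ f ∘ sinv

/-- 4-term relation: for a chord `{a, f a}` and a second chord with an endpoint
at `a + 1` (just after `a`), the alternating sum over the four diagrams obtained
by placing that endpoint just after `a`, just before `a`, just after `f a` and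
just before `f a` vanishes. -/
def FourTerm3 (W : (ZMod 6 → ZMod 6) → ℚ) : Prop :=
  ∀ f a, IsMatching3 f → f a ≠ a + 1 →
    W f - W (conjF3 (swapF3 a (a + 1)) (swapF3 a (a + 1)) f)
      + W (conjF3 (slideF3 a (f a)) (slideInvF3 a (f a)) f)
      - W (conjF3 (swapF3 (f a - 1) (f a)) (swapF3 (f a - 1) (f a))
            (conjF3 (slideF3 a (f a)) (slideInvF3 a (f a)) f)) = 0


open scoped Classical in
/-- The number of unordered pairs of crossing chords of a matching. -/
noncomputable def crossCount3 (f : ZMod 6 → ZMod 6) : ℕ :=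
  (Finset.univ.filter (fun p : ZMod 6 × ZMod 6 =>
    p.1.val < (f p.1).val ∧ p.2.val < (f p.2).val ∧ p.1.val < p.2.val ∧
      Crossed3 f p.1 p.2)).card

/-- The weight system `W₃`: 2 on the diagram whose three chords pairwise
cross, 1 on the chain diagram (exactly two crossing pairs), 0 otherwise. -/
noncomputable def W3 : (ZMod 6 → ZMod 6) → ℚ := fun f =>
  if crossCount3 f = 3 then 2 else if crossCount3 f = 2 then 1 else 0


-- ===== auxiliary material =====

instance (f : ZMod 6 → ZMod 6) (a b : ZMod 6) : Decidable (Crossed3 f a b) := by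
  unfold Crossed3; infer_instance

instance (f : ZMod 6 → ZMod 6) (a : ZMod 6) : Decidable (Isolated3 f a) := by
  unfold Isolated3; infer_instance

instance (f : ZMod 6 → ZMod 6) : Decidable (IsMatching3 f) := by
  unfold IsMatching3; infer_instance

def d1 : ZMod 6 → ZMod 6 := ![1, 0, 3, 2, 5, 4]
def d2 : ZMod 6 → ZMod 6 := ![1, 0, 4, 5, 2, 3]
def d3 : ZMod 6 → ZMod 6 := ![1, 0, 5, 4, 3, 2]
def d4 : ZMod 6 → ZMod 6 := ![2, 3, 0, 1, 5, 4]
def d5 : ZMod 6 → ZMod 6 := ![2, 4, 0, 5, 1, 3]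
def d6 : ZMod 6 → ZMod 6 := ![2, 5, 0, 4, 3, 1]
def d7 : ZMod 6 → ZMod 6 := ![3, 2, 1, 0, 5, 4]
def d8 : ZMod 6 → ZMod 6 := ![3, 4, 5, 0, 1, 2]
def d9 : ZMod 6 → ZMod 6 := ![3, 5, 4, 0, 2, 1]
def d10 : ZMod 6 → ZMod 6 := ![4, 2, 1, 5, 0, 3]
def d11 : ZMod 6 → ZMod 6 := ![4, 3, 5, 1, 0, 2]
def d12 : ZMod 6 → ZMod 6 := ![4, 5, 3, 2, 0, 1]
def d13 : ZMod 6 → ZMod 6 := ![5, 2, 1, 4, 3, 0]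
def d14 : ZMod 6 → ZMod 6 := ![5, 3, 4, 1, 2, 0]
def d15 : ZMod 6 → ZMod 6 := ![5, 4, 3, 2, 1, 0]

lemma ext6 (f g : ZMod 6 → ZMod 6) (h0 : f 0 = g 0) (h1 : f 1 = g 1) (h2 : f 2 = g 2)
    (h3 : f 3 = g 3) (h4 : f 4 = g 4) (h5 : f 5 = g 5) : f = g := by
  funext x
  have hx : ∀ x : ZMod 6, x = 0 ∨ x = 1 ∨ x = 2 ∨ x = 3 ∨ x = 4 ∨ x = 5 := by decide
  rcases hx x with rfl|rfl|rfl|rfl|rfl|rfl <;> assumption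

lemma cc_eq (f : ZMod 6 → ZMod 6) : crossCount3 f =
    (Finset.univ.filter (fun p : ZMod 6 × ZMod 6 =>
      p.1.val < (f p.1).val ∧ p.2.val < (f p.2).val ∧ p.1.val < p.2.val ∧
        Crossed3 f p.1 p.2)).card := by
  unfold crossCount3
  rw [Finset.filter_congr_decidable]

lemma hW1 : W3 d1 = 0 := by
  have h : crossCount3 d1 = 0 := by rw [cc_eq]; decide
  simp [W3, h]
lemma hW2 : W3 d2 = 0 := by
  have h : crossCount3 d2 = 1 := by rw [cc_eq]; decide
  simp [W3, h]
lemma hW3 : W3 d3 = 0 := by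
  have h : crossCount3 d3 = 0 := by rw [cc_eq]; decide
  simp [W3, h]
lemma hW4 : W3 d4 = 0 := by
  have h : crossCount3 d4 = 1 := by rw [cc_eq]; decide
  simp [W3, h]
lemma hW5 : W3 d5 = 1 := by
  have h : crossCount3 d5 = 2 := by rw [cc_eq]; decide
  simp [W3, h]
lemma hW6 : W3 d6 = 0 := by
  have h : crossCount3 d6 = 1 := by rw [cc_eq]; decide
  simp [W3, h]
lemma hW7 : W3 d7 = 0 := by
  have h : crossCount3 d7 = 0 := by rw [cc_eq]; decide
  simp [W3, h]
lemma hW8 : W3 d8 = 2 := by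
  have h : crossCount3 d8 = 3 := by rw [cc_eq]; decide
  simp [W3, h]
lemma hW9 : W3 d9 = 1 := by
  have h : crossCount3 d9 = 2 := by rw [cc_eq]; decide
  simp [W3, h]
lemma hW10 : W3 d10 = 0 := by
  have h : crossCount3 d10 = 1 := by rw [cc_eq]; decide
  simp [W3, h]
lemma hW11 : W3 d11 = 1 := by
  have h : crossCount3 d11 = 2 := by rw [cc_eq]; decide
  simp [W3, h]
lemma hW12 : W3 d12 = 0 := by
  have h : crossCount3 d12 = 1 := by rw [cc_eq]; decide
  simp [W3, h]
lemma hW13 : W3 d13 = 0 := by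
  have h : crossCount3 d13 = 0 := by rw [cc_eq]; decide
  simp [W3, h]
lemma hW14 : W3 d14 = 0 := by
  have h : crossCount3 d14 = 1 := by rw [cc_eq]; decide
  simp [W3, h]
lemma hW15 : W3 d15 = 0 := by
  have h : crossCount3 d15 = 0 := by rw [cc_eq]; decide
  simp [W3, h]

/-- the space of weight systems of degree 3 is one-dimensional:
every linear functional on degree-3 chord diagrams satisfying the 1-term and
4-term relations is a scalar multiple of `W₃` (which takes value 2 on the fully
crossing triple, 1 on the chain diagram and 0 otherwise). -/
theorem degree_three_weight_systems_one_dimensional :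
    ∀ W : (ZMod 6 → ZMod 6) → ℚ, OneTerm3 W → FourTerm3 W →
      ∃ c : ℚ, ∀ f, IsMatching3 f → W f = c * W3 f := by
  intro W h1T h4T
  have hz1 : W d1 = 0 := h1T d1 (by decide) (by decide)
  have hz2 : W d2 = 0 := h1T d2 (by decide) (by decide)
  have hz3 : W d3 = 0 := h1T d3 (by decide) (by decide)
  have hz4 : W d4 = 0 := h1T d4 (by decide) (by decide)
  have hz6 : W d6 = 0 := h1T d6 (by decide) (by decide)
  have hz7 : W d7 = 0 := h1T d7 (by decide) (by decide)
  have hz10 : W d10 = 0 := h1T d10 (by decide) (by decide)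
  have hz12 : W d12 = 0 := h1T d12 (by decide) (by decide)
  have hz13 : W d13 = 0 := h1T d13 (by decide) (by decide)
  have hz14 : W d14 = 0 := h1T d14 (by decide) (by decide)
  have hz15 : W d15 = 0 := h1T d15 (by decide) (by decide)
  have e1 := h4T d2 1 (by decide) (by decide)
  rw [show conjF3 (swapF3 (d2 1 - 1) (d2 1)) (swapF3 (d2 1 - 1) (d2 1))
        (conjF3 (slideF3 1 (d2 1)) (slideInvF3 1 (d2 1)) d2) = d2 from by decide,
      show conjF3 (slideF3 1 (d2 1)) (slideInvF3 1 (d2 1)) d2 = d9 from by decide,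
      show conjF3 (swapF3 1 (1 + 1)) (swapF3 1 (1 + 1)) d2 = d5 from by decide] at e1
  have e2 := h4T d4 5 (by decide) (by decide)
  rw [show conjF3 (swapF3 (d4 5 - 1) (d4 5)) (swapF3 (d4 5 - 1) (d4 5))
        (conjF3 (slideF3 5 (d4 5)) (slideInvF3 5 (d4 5)) d4) = d4 from by decide,
      show conjF3 (slideF3 5 (d4 5)) (slideInvF3 5 (d4 5)) d4 = d5 from by decide,
      show conjF3 (swapF3 5 (5 + 1)) (swapF3 5 (5 + 1)) d4 = d11 from by decide] at e2
  have e3 := h4T d8 0 (by decide) (by decide)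
  rw [show conjF3 (swapF3 (d8 0 - 1) (d8 0)) (swapF3 (d8 0 - 1) (d8 0))
        (conjF3 (slideF3 0 (d8 0)) (slideInvF3 0 (d8 0)) d8) = d9 from by decide,
      show conjF3 (slideF3 0 (d8 0)) (slideInvF3 0 (d8 0)) d8 = d6 from by decide,
      show conjF3 (swapF3 0 (0 + 1)) (swapF3 0 (0 + 1)) d8 = d11 from by decide] at e3
  refine ⟨W d5, fun f hf => ?_⟩
  have hx : ∀ x : ZMod 6, x = 0 ∨ x = 1 ∨ x = 2 ∨ x = 3 ∨ x = 4 ∨ x = 5 := by decide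
  rcases hx (f 0) with h0|h0|h0|h0|h0|h0
  · exact absurd h0 (hf.2 0)
  · have h1 : f 1 = 0 := by have t := hf.1 0; rw [h0] at t; exact t
    rcases hx (f 2) with h2|h2|h2|h2|h2|h2
    · have hc := hf.1 2
      rw [h2, h0] at hc
      exact absurd hc (by decide)
    · have hc := hf.1 2
      rw [h2, h1] at hc
      exact absurd hc (by decide)
    · exact absurd h2 (hf.2 2)
    · have h3 : f 3 = 2 := by have t := hf.1 2; rw [h2] at t; exact t
      rcases hx (f 4) with h4|h4|h4|h4|h4|h4
      · have hc := hf.1 4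
        rw [h4, h0] at hc
        exact absurd hc (by decide)
      · have hc := hf.1 4
        rw [h4, h1] at hc
        exact absurd hc (by decide)
      · have hc := hf.1 4
        rw [h4, h2] at hc
        exact absurd hc (by decide)
      · have hc := hf.1 4
        rw [h4, h3] at hc
        exact absurd hc (by decide)
      · exact absurd h4 (hf.2 4)
      · have h5 : f 5 = 4 := by have t := hf.1 4; rw [h4] at t; exact t
        have hfm : f = d1 := ext6 f d1 h0 h1 h2 h3 h4 h5
        rw [hfm, hW1]
        rw [hz1, mul_zero]
    · have h4 : f 4 = 2 := by have t := hf.1 2; rw [h2] at t; exact t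
      rcases hx (f 3) with h3|h3|h3|h3|h3|h3
      · have hc := hf.1 3
        rw [h3, h0] at hc
        exact absurd hc (by decide)
      · have hc := hf.1 3
        rw [h3, h1] at hc
        exact absurd hc (by decide)
      · have hc := hf.1 3
        rw [h3, h2] at hc
        exact absurd hc (by decide)
      · exact absurd h3 (hf.2 3)
      · have hc := hf.1 3
        rw [h3, h4] at hc
        exact absurd hc (by decide)
      · have h5 : f 5 = 3 := by have t := hf.1 3; rw [h3] at t; exact t
        have hfm : f = d2 := ext6 f d2 h0 h1 h2 h3 h4 h5
        rw [hfm, hW2]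
        rw [hz2, mul_zero]
    · have h5 : f 5 = 2 := by have t := hf.1 2; rw [h2] at t; exact t
      rcases hx (f 3) with h3|h3|h3|h3|h3|h3
      · have hc := hf.1 3
        rw [h3, h0] at hc
        exact absurd hc (by decide)
      · have hc := hf.1 3
        rw [h3, h1] at hc
        exact absurd hc (by decide)
      · have hc := hf.1 3
        rw [h3, h2] at hc
        exact absurd hc (by decide)
      · exact absurd h3 (hf.2 3)
      · have h4 : f 4 = 3 := by have t := hf.1 3; rw [h3] at t; exact t
        have hfm : f = d3 := ext6 f d3 h0 h1 h2 h3 h4 h5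
        rw [hfm, hW3]
        rw [hz3, mul_zero]
      · have hc := hf.1 3
        rw [h3, h5] at hc
        exact absurd hc (by decide)
  · have h2 : f 2 = 0 := by have t := hf.1 0; rw [h0] at t; exact t
    rcases hx (f 1) with h1|h1|h1|h1|h1|h1
    · have hc := hf.1 1
      rw [h1, h0] at hc
      exact absurd hc (by decide)
    · exact absurd h1 (hf.2 1)
    · have hc := hf.1 1
      rw [h1, h2] at hc
      exact absurd hc (by decide)
    · have h3 : f 3 = 1 := by have t := hf.1 1; rw [h1] at t; exact t
      rcases hx (f 4) with h4|h4|h4|h4|h4|h4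
      · have hc := hf.1 4
        rw [h4, h0] at hc
        exact absurd hc (by decide)
      · have hc := hf.1 4
        rw [h4, h1] at hc
        exact absurd hc (by decide)
      · have hc := hf.1 4
        rw [h4, h2] at hc
        exact absurd hc (by decide)
      · have hc := hf.1 4
        rw [h4, h3] at hc
        exact absurd hc (by decide)
      · exact absurd h4 (hf.2 4)
      · have h5 : f 5 = 4 := by have t := hf.1 4; rw [h4] at t; exact t
        have hfm : f = d4 := ext6 f d4 h0 h1 h2 h3 h4 h5
        rw [hfm, hW4]
        rw [hz4, mul_zero]
    · have h4 : f 4 = 1 := by have t := hf.1 1; rw [h1] at t; exact t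
      rcases hx (f 3) with h3|h3|h3|h3|h3|h3
      · have hc := hf.1 3
        rw [h3, h0] at hc
        exact absurd hc (by decide)
      · have hc := hf.1 3
        rw [h3, h1] at hc
        exact absurd hc (by decide)
      · have hc := hf.1 3
        rw [h3, h2] at hc
        exact absurd hc (by decide)
      · exact absurd h3 (hf.2 3)
      · have hc := hf.1 3
        rw [h3, h4] at hc
        exact absurd hc (by decide)
      · have h5 : f 5 = 3 := by have t := hf.1 3; rw [h3] at t; exact t
        have hfm : f = d5 := ext6 f d5 h0 h1 h2 h3 h4 h5
        rw [hfm, hW5]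
        rw [mul_one]
    · have h5 : f 5 = 1 := by have t := hf.1 1; rw [h1] at t; exact t
      rcases hx (f 3) with h3|h3|h3|h3|h3|h3
      · have hc := hf.1 3
        rw [h3, h0] at hc
        exact absurd hc (by decide)
      · have hc := hf.1 3
        rw [h3, h1] at hc
        exact absurd hc (by decide)
      · have hc := hf.1 3
        rw [h3, h2] at hc
        exact absurd hc (by decide)
      · exact absurd h3 (hf.2 3)
      · have h4 : f 4 = 3 := by have t := hf.1 3; rw [h3] at t; exact t
        have hfm : f = d6 := ext6 f d6 h0 h1 h2 h3 h4 h5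
        rw [hfm, hW6]
        rw [hz6, mul_zero]
      · have hc := hf.1 3
        rw [h3, h5] at hc
        exact absurd hc (by decide)
  · have h3 : f 3 = 0 := by have t := hf.1 0; rw [h0] at t; exact t
    rcases hx (f 1) with h1|h1|h1|h1|h1|h1
    · have hc := hf.1 1
      rw [h1, h0] at hc
      exact absurd hc (by decide)
    · exact absurd h1 (hf.2 1)
    · have h2 : f 2 = 1 := by have t := hf.1 1; rw [h1] at t; exact t
      rcases hx (f 4) with h4|h4|h4|h4|h4|h4
      · have hc := hf.1 4
        rw [h4, h0] at hc
        exact absurd hc (by decide)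
      · have hc := hf.1 4
        rw [h4, h1] at hc
        exact absurd hc (by decide)
      · have hc := hf.1 4
        rw [h4, h2] at hc
        exact absurd hc (by decide)
      · have hc := hf.1 4
        rw [h4, h3] at hc
        exact absurd hc (by decide)
      · exact absurd h4 (hf.2 4)
      · have h5 : f 5 = 4 := by have t := hf.1 4; rw [h4] at t; exact t
        have hfm : f = d7 := ext6 f d7 h0 h1 h2 h3 h4 h5
        rw [hfm, hW7]
        rw [hz7, mul_zero]
    · have hc := hf.1 1
      rw [h1, h3] at hc
      exact absurd hc (by decide)
    · have h4 : f 4 = 1 := by have t := hf.1 1; rw [h1] at t; exact t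
      rcases hx (f 2) with h2|h2|h2|h2|h2|h2
      · have hc := hf.1 2
        rw [h2, h0] at hc
        exact absurd hc (by decide)
      · have hc := hf.1 2
        rw [h2, h1] at hc
        exact absurd hc (by decide)
      · exact absurd h2 (hf.2 2)
      · have hc := hf.1 2
        rw [h2, h3] at hc
        exact absurd hc (by decide)
      · have hc := hf.1 2
        rw [h2, h4] at hc
        exact absurd hc (by decide)
      · have h5 : f 5 = 2 := by have t := hf.1 2; rw [h2] at t; exact t
        have hfm : f = d8 := ext6 f d8 h0 h1 h2 h3 h4 h5
        rw [hfm, hW8]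
        linarith [e1, e2, e3, hz2, hz4, hz6]
    · have h5 : f 5 = 1 := by have t := hf.1 1; rw [h1] at t; exact t
      rcases hx (f 2) with h2|h2|h2|h2|h2|h2
      · have hc := hf.1 2
        rw [h2, h0] at hc
        exact absurd hc (by decide)
      · have hc := hf.1 2
        rw [h2, h1] at hc
        exact absurd hc (by decide)
      · exact absurd h2 (hf.2 2)
      · have hc := hf.1 2
        rw [h2, h3] at hc
        exact absurd hc (by decide)
      · have h4 : f 4 = 2 := by have t := hf.1 2; rw [h2] at t; exact t
        have hfm : f = d9 := ext6 f d9 h0 h1 h2 h3 h4 h5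
        rw [hfm, hW9]
        rw [mul_one]; linarith [e1, e2, hz2, hz4]
      · have hc := hf.1 2
        rw [h2, h5] at hc
        exact absurd hc (by decide)
  · have h4 : f 4 = 0 := by have t := hf.1 0; rw [h0] at t; exact t
    rcases hx (f 1) with h1|h1|h1|h1|h1|h1
    · have hc := hf.1 1
      rw [h1, h0] at hc
      exact absurd hc (by decide)
    · exact absurd h1 (hf.2 1)
    · have h2 : f 2 = 1 := by have t := hf.1 1; rw [h1] at t; exact t
      rcases hx (f 3) with h3|h3|h3|h3|h3|h3
      · have hc := hf.1 3
        rw [h3, h0] at hc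
        exact absurd hc (by decide)
      · have hc := hf.1 3
        rw [h3, h1] at hc
        exact absurd hc (by decide)
      · have hc := hf.1 3
        rw [h3, h2] at hc
        exact absurd hc (by decide)
      · exact absurd h3 (hf.2 3)
      · have hc := hf.1 3
        rw [h3, h4] at hc
        exact absurd hc (by decide)
      · have h5 : f 5 = 3 := by have t := hf.1 3; rw [h3] at t; exact t
        have hfm : f = d10 := ext6 f d10 h0 h1 h2 h3 h4 h5
        rw [hfm, hW10]
        rw [hz10, mul_zero]
    · have h3 : f 3 = 1 := by have t := hf.1 1; rw [h1] at t; exact t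
      rcases hx (f 2) with h2|h2|h2|h2|h2|h2
      · have hc := hf.1 2
        rw [h2, h0] at hc
        exact absurd hc (by decide)
      · have hc := hf.1 2
        rw [h2, h1] at hc
        exact absurd hc (by decide)
      · exact absurd h2 (hf.2 2)
      · have hc := hf.1 2
        rw [h2, h3] at hc
        exact absurd hc (by decide)
      · have hc := hf.1 2
        rw [h2, h4] at hc
        exact absurd hc (by decide)
      · have h5 : f 5 = 2 := by have t := hf.1 2; rw [h2] at t; exact t
        have hfm : f = d11 := ext6 f d11 h0 h1 h2 h3 h4 h5
        rw [hfm, hW11]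
        rw [mul_one]; linarith [e1, e2, hz2, hz4]
    · have hc := hf.1 1
      rw [h1, h4] at hc
      exact absurd hc (by decide)
    · have h5 : f 5 = 1 := by have t := hf.1 1; rw [h1] at t; exact t
      rcases hx (f 2) with h2|h2|h2|h2|h2|h2
      · have hc := hf.1 2
        rw [h2, h0] at hc
        exact absurd hc (by decide)
      · have hc := hf.1 2
        rw [h2, h1] at hc
        exact absurd hc (by decide)
      · exact absurd h2 (hf.2 2)
      · have h3 : f 3 = 2 := by have t := hf.1 2; rw [h2] at t; exact t
        have hfm : f = d12 := ext6 f d12 h0 h1 h2 h3 h4 h5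
        rw [hfm, hW12]
        rw [hz12, mul_zero]
      · have hc := hf.1 2
        rw [h2, h4] at hc
        exact absurd hc (by decide)
      · have hc := hf.1 2
        rw [h2, h5] at hc
        exact absurd hc (by decide)
  · have h5 : f 5 = 0 := by have t := hf.1 0; rw [h0] at t; exact t
    rcases hx (f 1) with h1|h1|h1|h1|h1|h1
    · have hc := hf.1 1
      rw [h1, h0] at hc
      exact absurd hc (by decide)
    · exact absurd h1 (hf.2 1)
    · have h2 : f 2 = 1 := by have t := hf.1 1; rw [h1] at t; exact t
      rcases hx (f 3) with h3|h3|h3|h3|h3|h3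
      · have hc := hf.1 3
        rw [h3, h0] at hc
        exact absurd hc (by decide)
      · have hc := hf.1 3
        rw [h3, h1] at hc
        exact absurd hc (by decide)
      · have hc := hf.1 3
        rw [h3, h2] at hc
        exact absurd hc (by decide)
      · exact absurd h3 (hf.2 3)
      · have h4 : f 4 = 3 := by have t := hf.1 3; rw [h3] at t; exact t
        have hfm : f = d13 := ext6 f d13 h0 h1 h2 h3 h4 h5
        rw [hfm, hW13]
        rw [hz13, mul_zero]
      · have hc := hf.1 3
        rw [h3, h5] at hc
        exact absurd hc (by decide)
    · have h3 : f 3 = 1 := by have t := hf.1 1; rw [h1] at t; exact t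
      rcases hx (f 2) with h2|h2|h2|h2|h2|h2
      · have hc := hf.1 2
        rw [h2, h0] at hc
        exact absurd hc (by decide)
      · have hc := hf.1 2
        rw [h2, h1] at hc
        exact absurd hc (by decide)
      · exact absurd h2 (hf.2 2)
      · have hc := hf.1 2
        rw [h2, h3] at hc
        exact absurd hc (by decide)
      · have h4 : f 4 = 2 := by have t := hf.1 2; rw [h2] at t; exact t
        have hfm : f = d14 := ext6 f d14 h0 h1 h2 h3 h4 h5
        rw [hfm, hW14]
        rw [hz14, mul_zero]
      · have hc := hf.1 2
        rw [h2, h5] at hc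
        exact absurd hc (by decide)
    · have h4 : f 4 = 1 := by have t := hf.1 1; rw [h1] at t; exact t
      rcases hx (f 2) with h2|h2|h2|h2|h2|h2
      · have hc := hf.1 2
        rw [h2, h0] at hc
        exact absurd hc (by decide)
      · have hc := hf.1 2
        rw [h2, h1] at hc
        exact absurd hc (by decide)
      · exact absurd h2 (hf.2 2)
      · have h3 : f 3 = 2 := by have t := hf.1 2; rw [h2] at t; exact t
        have hfm : f = d15 := ext6 f d15 h0 h1 h2 h3 h4 h5
        rw [hfm, hW15]
        rw [hz15, mul_zero]
      · have hc := hf.1 2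
        rw [h2, h4] at hc
        exact absurd hc (by decide)
      · have hc := hf.1 2
        rw [h2, h5] at hc
        exact absurd hc (by decide)
    · have hc := hf.1 1
      rw [h1, h5] at hc
      exact absurd hc (by decide)
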